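/- Suppose a family of functions fₙ: ℂ² → ℂ indexed by rationals p/q (q ≥ 0, gcd(p,q)=1) satisfies: f_{1/0}(λ,τ) = 2cosh(λ/2), f_{n/1}(λ,τ) = 2cosh((τ+nλ)/2)/tanh(λ/2), and the recursion f_{(p+r)/(q+s)} = f_{p/q}·f_{r/s} - f_{(p-r)/(q-s)} for Farey neighbors p/q < r/s with q,s > 0. Then each f_{p/q} has the form f_{p/q}(λ,τ) = Σ_{k=-q}^{q} c_{p/q,k}(λ) exp(kτ/2), where the coefficient functions c_{p/q,k} are holomorphic in λ (on Re λ > 0), are real for real λ = l > 0, and the extreme coefficients c_{p/q,±q}(l) are nonzero for l > 0; moreover c_{(p+r)/(q+s),±(q+s)} = c_{p/q,±q}·c_{r/s,±s}. -/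

import Mathlib

open Complex

noncomputable def Efun (p q : ℤ) (lam : ℂ) : ℂ :=
  Complex.exp (p * lam / 2) / Complex.tanh (lam / 2) ^ q

lemma sinh_ne_zero_of_re_pos {z : ℂ} (h : 0 < z.re) : Complex.sinh z ≠ 0 := by
  rw [Complex.sinh]
  intro hz
  have h1 : Complex.exp z = Complex.exp (-z) := by
    have h0 : Complex.exp z - Complex.exp (-z) = 0 := by
      field_simp at hz; linear_combination hz
    linear_combination h0
  have := congrArg (‖·‖) h1
  rw [Complex.norm_exp, Complex.norm_exp, Real.exp_eq_exp] at this
  simp at this; linarith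

lemma cosh_ne_zero_of_re_pos {z : ℂ} (h : 0 < z.re) : Complex.cosh z ≠ 0 := by
  rw [Complex.cosh]
  intro hz
  have h1 : Complex.exp z = -Complex.exp (-z) := by
    have h0 : Complex.exp z + Complex.exp (-z) = 0 := by
      field_simp at hz; linear_combination hz
    linear_combination h0
  have := congrArg (‖·‖) h1
  rw [Complex.norm_exp, norm_neg, Complex.norm_exp, Real.exp_eq_exp] at this
  simp at this; linarith

lemma tanh_ne_zero_of_re_pos {z : ℂ} (h : 0 < z.re) : Complex.tanh z ≠ 0 :=
  div_ne_zero (sinh_ne_zero_of_re_pos h) (cosh_ne_zero_of_re_pos h)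

lemma Efun_mul (p r q s : ℤ) (hq : 1 ≤ q) (hs : 1 ≤ s) (lam : ℂ) :
    Efun p q lam * Efun r s lam = Efun (p + r) (q + s) lam := by
  unfold Efun
  by_cases ht : Complex.tanh (lam / 2) = 0
  · rw [ht, zero_zpow q (by omega), zero_zpow s (by omega), zero_zpow (q+s) (by omega)]
    simp
  · rw [div_mul_div_comm, ← Complex.exp_add, zpow_add₀ ht]
    congr 2
    push_cast; ring

lemma Efun_real (p q : ℤ) (l : ℝ) : (Efun p q (l : ℂ)).im = 0 := by
  unfold Efun
  have h1 : ((p : ℂ) * l / 2) = ((p * l / 2 : ℝ) : ℂ) := by push_cast; ring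
  have h2 : ((l : ℂ) / 2) = ((l / 2 : ℝ) : ℂ) := by push_cast; ring
  rw [h1, h2, ← Complex.ofReal_exp, ← Complex.ofReal_tanh, ← Complex.ofReal_zpow,
    ← Complex.ofReal_div, Complex.ofReal_im]

lemma Efun_ne_zero (p q : ℤ) (l : ℝ) (hl : 0 < l) : Efun p q (l : ℂ) ≠ 0 := by
  unfold Efun
  refine div_ne_zero (Complex.exp_ne_zero _) (zpow_ne_zero _ ?_)
  apply tanh_ne_zero_of_re_pos
  simp [Complex.div_re]
  positivity

lemma Efun_holo (p q : ℤ) : DifferentiableOn ℂ (Efun p q) {z : ℂ | 0 < z.re} := by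
  intro z hz
  have hz' : (0:ℝ) < (z / 2).re := by
    simp only [Set.mem_setOf_eq] at hz
    simp [Complex.div_re]; positivity
  have hcosh := cosh_ne_zero_of_re_pos hz'
  have htanh : DifferentiableAt ℂ (fun w : ℂ => Complex.tanh (w / 2)) z := by
    have heq : (fun w : ℂ => Complex.tanh (w / 2))
        = fun w : ℂ => Complex.sinh (w / 2) / Complex.cosh (w / 2) := by
      funext w; rw [Complex.tanh_eq_sinh_div_cosh]
    rw [heq]
    exact DifferentiableAt.div (by fun_prop) (by fun_prop) hcosh
  apply DifferentiableAt.differentiableWithinAt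
  exact DifferentiableAt.div (by fun_prop)
    (htanh.zpow (Or.inl (tanh_ne_zero_of_re_pos hz')))
    (zpow_ne_zero _ (tanh_ne_zero_of_re_pos hz'))

lemma exp_tau_add (i j : ℤ) (τ : ℂ) :
    Complex.exp (i * τ / 2) * Complex.exp (j * τ / 2) = Complex.exp ((i + j : ℤ) * τ / 2) := by
  rw [← Complex.exp_add]; congr 1; push_cast; ring

lemma conv_sum (m m' : ℤ) (a b : ℤ → ℂ)
    (hb : ∀ k, k ∉ Finset.Icc (-m') m' → b k = 0) (τ : ℂ) :
    (∑ i ∈ Finset.Icc (-m) m, a i * Complex.exp (i * τ / 2)) *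
      (∑ j ∈ Finset.Icc (-m') m', b j * Complex.exp (j * τ / 2))
    = ∑ k ∈ Finset.Icc (-(m + m')) (m + m'),
        (∑ i ∈ Finset.Icc (-m) m, a i * b (k - i)) * Complex.exp (k * τ / 2) := by
  rw [Finset.sum_mul_sum]
  simp only [Finset.sum_mul]
  conv_rhs => rw [Finset.sum_comm]
  apply Finset.sum_congr rfl
  intro i hi
  simp only [Finset.mem_Icc] at hi
  have hsub : Finset.Icc (i + -m') (i + m') ⊆ Finset.Icc (-(m + m')) (m + m') := by
    apply Finset.Icc_subset_Icc <;> omega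
  rw [show (∑ k ∈ Finset.Icc (-(m + m')) (m + m'), a i * b (k - i) * Complex.exp (k * τ / 2))
      = ∑ k ∈ Finset.Icc (i + -m') (i + m'), a i * b (k - i) * Complex.exp (k * τ / 2) from
    (Finset.sum_subset hsub (by
      intro k _ hk
      simp only [Finset.mem_Icc, not_and_or, not_le] at hk
      rw [hb (k - i) (by simp only [Finset.mem_Icc, not_and_or, not_le]; omega)]
      ring)).symm]
  rw [← Finset.map_add_left_Icc, Finset.sum_map]
  apply Finset.sum_congr rfl
  intro j hj
  simp only [addLeftEmbedding_apply, add_sub_cancel_left]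
  rw [← exp_tau_add i j τ]
  ring

lemma conv_top (m m' : ℤ) (hm : 0 ≤ m) (a b : ℤ → ℂ)
    (hb : ∀ k, k ∉ Finset.Icc (-m') m' → b k = 0) :
    (∑ i ∈ Finset.Icc (-m) m, a i * b (m + m' - i)) = a m * b m' := by
  rw [Finset.sum_eq_single_of_mem m (by simp [Finset.mem_Icc]; omega)]
  · rw [show m + m' - m = m' by ring]
  · intro i hi hne
    simp only [Finset.mem_Icc] at hi
    rw [hb (m + m' - i) (by simp only [Finset.mem_Icc, not_and_or, not_le]; omega)]
    ring

lemma conv_bot (m m' : ℤ) (hm : 0 ≤ m) (a b : ℤ → ℂ)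
    (hb : ∀ k, k ∉ Finset.Icc (-m') m' → b k = 0) :
    (∑ i ∈ Finset.Icc (-m) m, a i * b (-(m + m') - i)) = a (-m) * b (-m') := by
  rw [Finset.sum_eq_single_of_mem (-m) (by simp [Finset.mem_Icc]; omega)]
  · rw [show -(m + m') - -m = -m' by ring]
  · intro i hi hne
    simp only [Finset.mem_Icc] at hi
    rw [hb (-(m + m') - i) (by simp only [Finset.mem_Icc, not_and_or, not_le]; omega)]
    ring

def ExpandF (g : ℂ → ℂ → ℂ) (m : ℤ) : Prop :=
  ∃ c : ℤ → ℂ → ℂ,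
    (∀ k, k ∉ Finset.Icc (-m) m → c k = 0) ∧
    (∀ lam τ : ℂ, g lam τ = ∑ k ∈ Finset.Icc (-m) m, c k lam * Complex.exp (k * τ / 2)) ∧
    (∀ k, DifferentiableOn ℂ (c k) {z : ℂ | 0 < z.re}) ∧
    (∀ k : ℤ, ∀ l : ℝ, 0 < l → (c k (l : ℂ)).im = 0)

def GoodF (g : ℂ → ℂ → ℂ) (p q : ℤ) : Prop :=
  ∃ c : ℤ → ℂ → ℂ,
    (∀ k, k ∉ Finset.Icc (-q) q → c k = 0) ∧
    (∀ lam τ : ℂ, g lam τ = ∑ k ∈ Finset.Icc (-q) q, c k lam * Complex.exp (k * τ / 2)) ∧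
    (∀ k, DifferentiableOn ℂ (c k) {z : ℂ | 0 < z.re}) ∧
    (∀ k : ℤ, ∀ l : ℝ, 0 < l → (c k (l : ℂ)).im = 0) ∧
    c q = Efun p q ∧ c (-q) = Efun (-p) q

lemma GoodF.expandF {g p q} (h : GoodF g p q) : ExpandF g q := by
  obtain ⟨c, h1, h2, h3, h4, _, _⟩ := h
  exact ⟨c, h1, h2, h3, h4⟩

lemma ExpandF.mono {g m} (h : ExpandF g m) {m' : ℤ} (hm : m ≤ m') : ExpandF g m' := by
  obtain ⟨c, hv, he, hh, hr⟩ := h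
  refine ⟨fun k => if k ∈ Finset.Icc (-m) m then c k else 0, ?_, ?_, ?_, ?_⟩
  · intro k hk
    have : k ∉ Finset.Icc (-m) m := by
      simp only [Finset.mem_Icc] at hk ⊢; omega
    simp only [if_neg this]
  · intro lam τ
    rw [he lam τ,
      ← Finset.sum_subset (Finset.Icc_subset_Icc (neg_le_neg hm) hm)
        (fun k _ hk => by simp only [if_neg hk, Pi.zero_apply, zero_mul])]
    exact Finset.sum_congr rfl (fun k hk => by simp only [if_pos hk])
  · intro k
    by_cases hk : k ∈ Finset.Icc (-m) m
    · simp only [if_pos hk]; exact hh k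
    · simp only [if_neg hk]; exact differentiableOn_const 0
  · intro k l hl
    by_cases hk : k ∈ Finset.Icc (-m) m
    · simp only [if_pos hk]; exact hr k l hl
    · simp only [if_neg hk]; simp

lemma combine (g1 g2 g3 g : ℂ → ℂ → ℂ) (p1 q1 p2 q2 : ℤ) (h1 : 1 ≤ q1) (h2 : 1 ≤ q2)
    (G1 : GoodF g1 p1 q1) (G2 : GoodF g2 p2 q2) (G3 : ExpandF g3 (q1 + q2 - 1))
    (hg : ∀ lam τ : ℂ, g lam τ = g1 lam τ * g2 lam τ - g3 lam τ) :
    GoodF g (p1 + p2) (q1 + q2) := by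
  obtain ⟨c1, v1, e1, d1, r1, t1, b1⟩ := G1
  obtain ⟨c2, v2, e2, d2, r2, t2, b2⟩ := G2
  obtain ⟨c3, v3, e3, d3, r3⟩ := G3
  refine ⟨fun k lam => (∑ i ∈ Finset.Icc (-q1) q1, c1 i lam * c2 (k - i) lam) - c3 k lam,
    ?_, ?_, ?_, ?_, ?_, ?_⟩
  · -- vanish outside
    intro k hk
    simp only [Finset.mem_Icc, not_and_or, not_le] at hk
    funext lam
    show (∑ i ∈ Finset.Icc (-q1) q1, c1 i lam * c2 (k - i) lam) - c3 k lam = (0 : ℂ → ℂ) lam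
    have hz1 : ∀ i ∈ Finset.Icc (-q1) q1, c1 i lam * c2 (k - i) lam = 0 := by
      intro i hi
      simp only [Finset.mem_Icc] at hi
      rw [show c2 (k - i) = 0 from v2 _ (by simp only [Finset.mem_Icc, not_and_or, not_le]; omega)]
      simp
    rw [Finset.sum_eq_zero hz1,
      show c3 k = 0 from v3 _ (by simp only [Finset.mem_Icc, not_and_or, not_le]; omega)]
    simp
  · -- expansion
    intro lam τ
    have hb : ∀ k, k ∉ Finset.Icc (-q2) q2 → (fun j => c2 j lam) k = 0 :=
      fun k hk => by simp only [v2 k hk, Pi.zero_apply]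
    have hconv := conv_sum q1 q2 (fun i => c1 i lam) (fun j => c2 j lam) hb τ
    have h3 : (∑ k ∈ Finset.Icc (-(q1 + q2 - 1)) (q1 + q2 - 1), c3 k lam * Complex.exp (k * τ / 2))
        = ∑ k ∈ Finset.Icc (-(q1 + q2)) (q1 + q2), c3 k lam * Complex.exp (k * τ / 2) :=
      Finset.sum_subset (Finset.Icc_subset_Icc (by omega) (by omega))
        (fun k _ hk => by simp only [v3 k hk, Pi.zero_apply, zero_mul])
    rw [hg, e1, e2, e3, hconv, h3, ← Finset.sum_sub_distrib]
    apply Finset.sum_congr rfl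
    intro k _
    simp only
    ring
  · -- holomorphic
    intro k
    apply DifferentiableOn.sub _ (d3 k)
    apply DifferentiableOn.fun_sum
    intro i _
    exact (d1 i).mul (d2 (k - i))
  · -- real
    intro k l hl
    show ((∑ i ∈ Finset.Icc (-q1) q1, c1 i (l : ℂ) * c2 (k - i) (l : ℂ)) - c3 k (l : ℂ)).im = 0
    rw [Complex.sub_im, Complex.im_sum, r3 k l hl]
    rw [Finset.sum_eq_zero, sub_zero]
    intro i _
    rw [Complex.mul_im, r1 i l hl, r2 (k - i) l hl]
    ring
  · -- top
    funext lam
    show (∑ i ∈ Finset.Icc (-q1) q1, c1 i lam * c2 (q1 + q2 - i) lam) - c3 (q1 + q2) lam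
        = Efun (p1 + p2) (q1 + q2) lam
    rw [show c3 (q1 + q2) lam = 0 from by
        rw [v3 (q1 + q2) (by simp only [Finset.mem_Icc, not_and_or, not_le]; omega)]; rfl,
      sub_zero]
    have h := conv_top q1 q2 (by omega) (fun i => c1 i lam) (fun j => c2 j lam)
      (fun k hk => by simp only [v2 k hk, Pi.zero_apply])
    rw [h, show c1 q1 lam = Efun p1 q1 lam from by rw [t1],
      show c2 q2 lam = Efun p2 q2 lam from by rw [t2],
      Efun_mul p1 p2 q1 q2 h1 h2]
  · -- bottom
    funext lam
    show (∑ i ∈ Finset.Icc (-q1) q1, c1 i lam * c2 (-(q1 + q2) - i) lam) - c3 (-(q1 + q2)) lam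
        = Efun (-(p1 + p2)) (q1 + q2) lam
    rw [show c3 (-(q1 + q2)) lam = 0 from by
        rw [v3 (-(q1 + q2)) (by simp only [Finset.mem_Icc, not_and_or, not_le]; omega)]; rfl,
      sub_zero]
    have h := conv_bot q1 q2 (by omega) (fun i => c1 i lam) (fun j => c2 j lam)
      (fun k hk => by simp only [v2 k hk, Pi.zero_apply])
    rw [h, show c1 (-q1) lam = Efun (-p1) q1 lam from by rw [b1],
      show c2 (-q2) lam = Efun (-p2) q2 lam from by rw [b2],
      Efun_mul (-p1) (-p2) q1 q2 h1 h2, show -p1 + -p2 = -(p1 + p2) from by ring]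

lemma base1 (g : ℂ → ℂ → ℂ) (n : ℤ)
    (hg : ∀ lam τ : ℂ, g lam τ = 2 * Complex.cosh ((τ + n * lam) / 2) / Complex.tanh (lam / 2)) :
    GoodF g n 1 := by
  refine ⟨fun k => if k = 1 then Efun n 1 else if k = -1 then Efun (-n) 1 else 0,
    ?_, ?_, ?_, ?_, ?_, ?_⟩
  · intro k hk
    simp only [Finset.mem_Icc] at hk
    simp only [if_neg (show k ≠ 1 by omega), if_neg (show k ≠ -1 by omega)]
  · intro lam τ
    rw [hg, show Finset.Icc (-1 : ℤ) 1 = {-1, 0, 1} from by decide]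
    rw [Finset.sum_insert (by decide), Finset.sum_insert (by decide), Finset.sum_singleton]
    norm_num
    have h1 : Complex.exp ((τ + n * lam) / 2)
        = Complex.exp ((n : ℂ) * lam / 2) * Complex.exp (((1 : ℤ) : ℂ) * τ / 2) := by
      rw [← Complex.exp_add]; congr 1; push_cast; ring
    have h2 : Complex.exp (-((τ + n * lam) / 2))
        = Complex.exp (((-n : ℤ) : ℂ) * lam / 2) * Complex.exp (((-1 : ℤ) : ℂ) * τ / 2) := by
      rw [← Complex.exp_add]; congr 1; push_cast; ring
    rw [Complex.cosh, h1, h2]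
    simp only [Efun, zpow_one]
    ring
  · intro k
    by_cases hk1 : k = 1
    · simp only [if_pos hk1]; exact Efun_holo n 1
    by_cases hk2 : k = -1
    · simp only [if_neg hk1, if_pos hk2]; exact Efun_holo (-n) 1
    · simp only [if_neg hk1, if_neg hk2]; exact differentiableOn_const 0
  · intro k l hl
    by_cases hk1 : k = 1
    · simp only [if_pos hk1]; exact Efun_real n 1 l
    by_cases hk2 : k = -1
    · simp only [if_neg hk1, if_pos hk2]; exact Efun_real (-n) 1 l
    · simp only [if_neg hk1, if_neg hk2]; simp
  · simp
  · norm_num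

lemma expand_const (g : ℂ → ℂ → ℂ)
    (hg : ∀ lam τ : ℂ, g lam τ = 2 * Complex.cosh (lam / 2)) (m : ℤ) (hm : 0 ≤ m) :
    ExpandF g m := by
  have h0 : ExpandF g 0 := by
    refine ⟨fun k => if k = 0 then (fun lam => 2 * Complex.cosh (lam / 2)) else 0,
      ?_, ?_, ?_, ?_⟩
    · intro k hk
      simp only [Finset.mem_Icc] at hk
      simp only [if_neg (show k ≠ 0 by omega)]
    · intro lam τ
      rw [hg, show (-(0:ℤ)) = 0 from by ring, Finset.Icc_self, Finset.sum_singleton]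
      norm_num
    · intro k
      by_cases hk : k = 0
      · simp only [if_pos hk]
        apply Differentiable.differentiableOn
        fun_prop
      · simp only [if_neg hk]; exact differentiableOn_const 0
    · intro k l hl
      by_cases hk : k = 0
      · simp only [if_pos hk]
        have h2 : ((l : ℂ) / 2) = ((l / 2 : ℝ) : ℂ) := by push_cast; ring
        rw [h2, ← Complex.ofReal_cosh, Complex.mul_im]
        simp [-Complex.ofReal_cosh]
      · simp only [if_neg hk]; simp
  exact h0.mono hm


theorem trace_functions_laurent_form
    (f : ℤ → ℤ → ℂ → ℂ → ℂ)
    (hsym : ∀ p q : ℤ, f (-p) (-q) = f p q)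
    (h10 : ∀ lam τ : ℂ, f 1 0 lam τ = 2 * Complex.cosh (lam / 2))
    (hn1 : ∀ n : ℤ, ∀ lam τ : ℂ,
      f n 1 lam τ = 2 * Complex.cosh ((τ + n * lam) / 2) / Complex.tanh (lam / 2))
    (hrec : ∀ p q r s : ℤ, 0 < q → 0 < s →
      Int.gcd p q = 1 → Int.gcd r s = 1 →
      (p * s - q * r = -1 ∨ p * s - q * r = 1) → (p : ℚ) / q < (r : ℚ) / s →
      ∀ lam τ : ℂ,
        f (p + r) (q + s) lam τ = f p q lam τ * f r s lam τ - f (p - r) (q - s) lam τ) :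
    ∃ c : ℤ → ℤ → ℤ → ℂ → ℂ,
      ∀ p q : ℤ, 1 ≤ q → Int.gcd p q = 1 →
        (∀ lam τ : ℂ,
          f p q lam τ = ∑ k ∈ Finset.Icc (-q) q, c p q k lam * Complex.exp (k * τ / 2)) ∧
        (∀ k : ℤ, DifferentiableOn ℂ (c p q k) {z : ℂ | 0 < z.re}) ∧
        (∀ k : ℤ, ∀ l : ℝ, 0 < l → (c p q k l).im = 0) ∧
        (∀ l : ℝ, 0 < l → c p q q (l : ℂ) ≠ 0 ∧ c p q (-q) (l : ℂ) ≠ 0) ∧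
        (∀ r s : ℤ, 0 < s → Int.gcd r s = 1 →
          (p * s - q * r = -1 ∨ p * s - q * r = 1) → (p : ℚ) / q < (r : ℚ) / s →
          (∀ lam : ℂ, c (p + r) (q + s) (q + s) lam = c p q q lam * c r s s lam) ∧
          (∀ lam : ℂ, c (p + r) (q + s) (-(q + s)) lam = c p q (-q) lam * c r s (-s) lam)) := by
    -- main induction: GoodF for all coprime p/q with q ≥ 1
  have main : ∀ n : ℕ, ∀ p q : ℤ, 1 ≤ q → q ≤ (n : ℤ) → Int.gcd p q = 1 → GoodF (f p q) p q := by
    intro n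
    induction n with
    | zero => intro p q hq hqn _; omega
    | succ n ih =>
      intro p q hq hqn hgcd
      by_cases hqsmall : q ≤ (n : ℤ)
      · exact ih p q hq hqsmall hgcd
      · -- q = n + 1
        by_cases hq1 : q = 1
        · subst hq1
          exact base1 (f p 1) p (hn1 p)
        · -- q ≥ 2 : construct Farey parents
          have hq2 : 2 ≤ q := by omega
          have hcop : IsCoprime p q := Int.isCoprime_iff_gcd_eq_one.mpr hgcd
          obtain ⟨u, v, huv⟩ := hcop
          set q1 : ℤ := u % q with hq1def
          have hq1nonneg : 0 ≤ q1 := Int.emod_nonneg u (by omega)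
          have hq1lt : q1 < q := Int.emod_lt_of_pos u (by omega)
          have hdvd : q ∣ p * q1 - 1 := by
            refine ⟨-(v + p * (u / q)), ?_⟩
            rw [hq1def, Int.emod_def]
            linear_combination huv
          have hq1pos : 1 ≤ q1 := by
            rcases eq_or_lt_of_le hq1nonneg with h | h
            · exfalso
              rw [← h] at hdvd
              simp only [mul_zero, zero_sub] at hdvd
              have : q ∣ 1 := (dvd_neg.mp hdvd)
              have := Int.le_of_dvd one_pos this
              omega
            · omega
          set p1 : ℤ := (p * q1 - 1) / q with hp1def
          have hp1q : p1 * q = p * q1 - 1 := Int.ediv_mul_cancel hdvd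
          set q2 : ℤ := q - q1 with hq2def
          set p2 : ℤ := p - p1 with hp2def
          have hq2pos : 1 ≤ q2 := by omega
          have hdet : p1 * q2 - q1 * p2 = -1 := by
            rw [hq2def, hp2def]; linear_combination hp1q
          have hgcd1 : Int.gcd p1 q1 = 1 :=
            Int.isCoprime_iff_gcd_eq_one.mp ⟨-q2, p2, by linear_combination -hp1q⟩
          have hgcd2 : Int.gcd p2 q2 = 1 :=
            Int.isCoprime_iff_gcd_eq_one.mp ⟨q1, -p1, by linear_combination -hp1q⟩
          have hlt : (p1 : ℚ) / q1 < (p2 : ℚ) / q2 := by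
            rw [div_lt_div_iff₀ (by exact_mod_cast hq1pos) (by exact_mod_cast hq2pos)]
            have : p1 * q2 < p2 * q1 := by nlinarith [hdet]
            exact_mod_cast this
          have hrec' := hrec p1 q1 p2 q2 (by omega) (by omega) hgcd1 hgcd2 (Or.inl hdet) hlt
          have hpq : p = p1 + p2 ∧ q = q1 + q2 := by constructor <;> omega
          -- GoodF for the two parents
          have G1 : GoodF (f p1 q1) p1 q1 := ih p1 q1 hq1pos (by omega) hgcd1
          have G2 : GoodF (f p2 q2) p2 q2 := ih p2 q2 hq2pos (by omega) hgcd2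
          -- ExpandF for the difference term
          have G3 : ExpandF (f (p1 - p2) (q1 - q2)) (q1 + q2 - 1) := by
            rcases lt_trichotomy q1 q2 with hc | hc | hc
            · -- q1 < q2 : use symmetry
              have hfeq : f (p1 - p2) (q1 - q2) = f (p2 - p1) (q2 - q1) := by
                have := hsym (p2 - p1) (q2 - q1)
                rw [show -(p2 - p1) = p1 - p2 from by ring, show -(q2 - q1) = q1 - q2 from by ring] at this
                exact this
              have hgcd3 : Int.gcd (p2 - p1) (q2 - q1) = 1 :=
                Int.isCoprime_iff_gcd_eq_one.mp ⟨q1, -p1, by linear_combination -hp1q⟩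
              have G := ih (p2 - p1) (q2 - q1) (by omega) (by omega) hgcd3
              rw [hfeq]
              exact G.expandF.mono (by omega)
            · -- q1 = q2 : difference is f (±1) 0
              have hq11 : q1 = 1 ∧ p1 - p2 = -1 := by
                have h1 : q1 * (p1 - p2) = -1 := by
                  linear_combination hdet + p1 * hc
                have : q1 ∣ 1 := dvd_neg.mp ⟨p1 - p2, h1.symm⟩
                have hq1le := Int.le_of_dvd one_pos this
                constructor
                · omega
                · have : q1 = 1 := by omega
                  rw [this] at h1; omega
              have hfeq : ∀ lam τ : ℂ, f (p1 - p2) (q1 - q2) lam τ = 2 * Complex.cosh (lam / 2) := by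
                intro lam τ
                rw [show p1 - p2 = -1 from hq11.2, show q1 - q2 = 0 from by omega,
                  show (0 : ℤ) = -0 from rfl, show (-1 : ℤ) = -1 from rfl]
                rw [show f (-1) (-0) = f 1 0 from hsym 1 0, h10]
              exact expand_const _ hfeq _ (by omega)
            · -- q1 > q2
              have hgcd3 : Int.gcd (p1 - p2) (q1 - q2) = 1 :=
                Int.isCoprime_iff_gcd_eq_one.mp ⟨-q2, p2, by linear_combination -hp1q⟩
              exact (ih (p1 - p2) (q1 - q2) (by omega) (by omega) hgcd3).expandF.mono (by omega)
          have := combine (f p1 q1) (f p2 q2) (f (p1 - p2) (q1 - q2)) (f p q)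
            p1 q1 p2 q2 hq1pos hq2pos G1 G2 G3
            (by intro lam τ; rw [hpq.1, hpq.2]; exact hrec' lam τ)
          rw [← hpq.1, ← hpq.2] at this
          exact this
  have mainAll : ∀ p q : ℤ, 1 ≤ q → Int.gcd p q = 1 → GoodF (f p q) p q := by
    intro p q hq hgcd
    exact main q.toNat p q hq (by omega) hgcd
  -- choose the coefficients
  classical
  refine ⟨fun p q => if h : 1 ≤ q ∧ Int.gcd p q = 1 then (mainAll p q h.1 h.2).choose else fun _ _ => 0, ?_⟩
  intro p q hq hgcd
  have hcond : 1 ≤ q ∧ Int.gcd p q = 1 := ⟨hq, hgcd⟩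
  obtain ⟨hv, he, hd, hr, ht, hb⟩ := (mainAll p q hcond.1 hcond.2).choose_spec
  simp only [dif_pos hcond]
  refine ⟨he, hd, hr, ?_, ?_⟩
  · intro l hl
    rw [ht, hb]
    exact ⟨Efun_ne_zero p q l hl, Efun_ne_zero (-p) q l hl⟩
  · intro r s hs hgcdrs hdet hlt
    have hcondrs : 1 ≤ s ∧ Int.gcd r s = 1 := ⟨hs, hgcdrs⟩
    obtain ⟨_, _, _, _, ht2, hb2⟩ := (mainAll r s hcondrs.1 hcondrs.2).choose_spec
    have hgcdsum : Int.gcd (p + r) (q + s) = 1 := by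
      apply Int.isCoprime_iff_gcd_eq_one.mp
      rcases hdet with h | h
      · exact ⟨-s, r, by linear_combination -h⟩
      · exact ⟨s, -r, by linear_combination h⟩
    have hcondsum : 1 ≤ q + s ∧ Int.gcd (p + r) (q + s) = 1 := ⟨by omega, hgcdsum⟩
    obtain ⟨_, _, _, _, ht3, hb3⟩ := (mainAll (p + r) (q + s) hcondsum.1 hcondsum.2).choose_spec
    constructor
    · intro lam
      simp only [dif_pos hcondrs, dif_pos hcondsum]
      rw [ht, ht2, ht3, Efun_mul p r q s hq hs]
    · intro lam
      simp only [dif_pos hcondrs, dif_pos hcondsum]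
      rw [hb, hb2, hb3, Efun_mul (-p) (-r) q s hq hs, show -p + -r = -(p + r) from by ring]
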